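/- Let P₁, P₂ : 𝕋 → ℂ be trigonometric polynomials with P₂ real-valued, let B ⊂ ℤ be a finite nonempty set, and let c, L > 0. Suppose that |P₁(x)| ≤ P₂(x) + L for all x ∈ 𝕋, that the Fourier coefficient P̂₁(b) is real and satisfies P̂₁(b) ≥ 1 + c for every b ∈ B, and that |P̂₂(m)| ≤ 1 for every m ∈ ℤ. Then L ≥ c·|B| / ‖1̂_B‖₁². -/

import Mathlib

open MeasureTheory intervalIntegral Complex Finset
open scoped ComplexConjugate

/-- `e(x) = e^{2πix}`. -/
noncomputable def eC (x : ℝ) : ℂ := Complex.exp (2 * Real.pi * Complex.I * x)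

/-- `1̂_B(x) = ∑_{b ∈ B} e(bx)`. -/
noncomputable def fhat (B : Finset ℤ) (x : ℝ) : ℂ := ∑ b ∈ B, eC ((b : ℝ) * x)

/-- The trigonometric polynomial with (finitely supported) coefficients `c`. -/
noncomputable def trigPoly (c : ℤ →₀ ℂ) (x : ℝ) : ℂ :=
  ∑ m ∈ c.support, c m * eC ((m : ℝ) * x)

namespace HHaux

lemma eC_add (a b : ℝ) : eC (a + b) = eC a * eC b := by
  rw [eC, eC, eC, ← Complex.exp_add]; congr 1; push_cast; ring

lemma conj_eC (t : ℝ) : conj (eC t) = eC (-t) := by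
  rw [eC, eC, ← Complex.exp_conj]; congr 1
  simp only [map_mul, Complex.conj_I, Complex.conj_ofReal, map_ofNat]
  push_cast; ring

lemma abs_eC (t : ℝ) : ‖eC t‖ = 1 := by
  have h : eC t = Complex.exp ((2 * Real.pi * t : ℝ) * Complex.I) := by
    rw [eC]; congr 1; push_cast; ring
  rw [h, Complex.norm_exp_ofReal_mul_I]

lemma eC_zero : eC 0 = 1 := by simp [eC]

lemma cont_eC (r : ℝ) : Continuous fun x : ℝ => eC (r * x) := by
  unfold eC; fun_prop

lemma cont_fhat (B : Finset ℤ) : Continuous (fhat B) := by unfold fhat eC; fun_prop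

lemma cont_u (B : Finset ℤ) : Continuous fun x => ‖fhat B x‖ :=
  continuous_norm.comp (cont_fhat B)

lemma cont_uC (B : Finset ℤ) : Continuous fun x => (‖fhat B x‖ : ℂ) :=
  Complex.continuous_ofReal.comp (cont_u B)

lemma cont_conj_fhat (B : Finset ℤ) : Continuous fun x => conj (fhat B x) :=
  Complex.continuous_conj.comp (cont_fhat B)

lemma cont_trig (c : ℤ →₀ ℂ) : Continuous (trigPoly c) := by unfold trigPoly eC; fun_prop

lemma orth (m : ℤ) : (∫ x in (0:ℝ)..1, eC ((m : ℝ) * x)) = if m = 0 then 1 else 0 := by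
  rcases eq_or_ne m 0 with h | h
  · simp [h, eC_zero]
  · have hc : (2 * Real.pi * Complex.I * m : ℂ) ≠ 0 := by
      simp [Real.pi_ne_zero, Complex.I_ne_zero, h]
    have key : ∀ x : ℝ, eC ((m : ℝ) * x) = Complex.exp ((2 * Real.pi * Complex.I * m) * x) := by
      intro x; rw [eC]; congr 1; push_cast; ring
    simp only [key]
    rw [integral_exp_mul_complex hc]
    have h1 : (2 * Real.pi * Complex.I * m : ℂ) * (1:ℝ) = (m : ℤ) * (2 * Real.pi * Complex.I) := by
      push_cast; ring
    have h2 : Complex.exp ((2 * Real.pi * Complex.I * m : ℂ) * (0:ℝ)) = 1 := by simp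
    rw [h1, h2, Complex.exp_int_mul_two_pi_mul_I]
    simp [h]

/-- conj of an interval integral -/
lemma integral_conj' {f : ℝ → ℂ} {a b : ℝ} :
    (∫ x in a..b, conj (f x)) = conj (∫ x in a..b, f x) := by
  unfold intervalIntegral
  rw [integral_conj, integral_conj, ← map_sub]

/-- re of an interval integral -/
lemma integral_re' {f : ℝ → ℂ} {a b : ℝ} (hf : IntervalIntegrable f volume a b) :
    (∫ x in a..b, (f x).re) = (∫ x in a..b, f x).re := by
  simpa using Complex.reCLM.intervalIntegral_comp_comm hf

lemma intF (m : ℤ) (B : Finset ℤ) :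
    (∫ x in (0:ℝ)..1, eC ((m:ℝ) * x) * conj (fhat B x)) = if m ∈ B then 1 else 0 := by
  have h1 : ∀ x : ℝ, eC ((m:ℝ)*x) * conj (fhat B x) = ∑ b ∈ B, eC (((m - b : ℤ) : ℝ) * x) := by
    intro x
    rw [fhat, map_sum, Finset.mul_sum]
    refine Finset.sum_congr rfl fun b _ => ?_
    rw [conj_eC, ← eC_add]; congr 1; push_cast; ring
  simp only [h1]
  rw [intervalIntegral.integral_finset_sum
    (fun b _ => ((cont_eC _).intervalIntegrable _ _))]
  simp only [orth, sub_eq_zero]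
  rw [Finset.sum_ite_eq B m (fun _ => (1:ℂ))]

/-- the Fourier coefficient (at `-m`) of `|1̂_B|`. -/
noncomputable def aC (B : Finset ℤ) (m : ℤ) : ℂ :=
  ∫ x in (0:ℝ)..1, (‖fhat B x‖ : ℂ) * eC ((m:ℝ) * x)

lemma cont_ue (B : Finset ℤ) (r : ℝ) :
    Continuous fun x => (‖fhat B x‖ : ℂ) * eC (r * x) :=
  (cont_uC B).mul (cont_eC r)

lemma aC_neg (B : Finset ℤ) (m : ℤ) : aC B (-m) = conj (aC B m) := by
  rw [aC, aC, ← integral_conj']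
  refine intervalIntegral.integral_congr fun x _ => ?_
  rw [map_mul, Complex.conj_ofReal, conj_eC]
  congr 2
  push_cast; ring

lemma int_u_sq (B : Finset ℤ) :
    (∫ x in (0:ℝ)..1, (‖fhat B x‖)^2) = (B.card : ℝ) := by
  have h0 : ∀ x : ℝ, (((‖fhat B x‖)^2 : ℝ) : ℂ) = fhat B x * conj (fhat B x) := by
    intro x
    rw [Complex.mul_conj, Complex.sq_norm]
  have h1 : (∫ x in (0:ℝ)..1, (((‖fhat B x‖)^2 : ℝ) : ℂ)) = (B.card : ℂ) := by
    simp only [h0]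
    have h2 : ∀ x : ℝ, fhat B x * conj (fhat B x)
        = ∑ b ∈ B, eC ((b:ℝ)*x) * conj (fhat B x) := by
      intro x; rw [fhat, Finset.sum_mul]
    simp only [h2]
    rw [intervalIntegral.integral_finset_sum
      (fun b _ => (((cont_eC _).fun_mul (cont_conj_fhat B)).intervalIntegrable _ _))]
    simp only [intF]
    rw [Finset.sum_ite_of_true (fun b hb => hb)]
    simp
  rw [intervalIntegral.integral_ofReal] at h1
  exact_mod_cast h1

lemma bessel (B : Finset ℤ) (S : Finset ℤ) :
    ∑ m ∈ S, Complex.normSq (aC B m) ≤ (B.card : ℝ) := by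
  set u : ℝ → ℝ := fun x => ‖fhat B x‖ with hu
  set P : ℝ → ℂ := fun x => ∑ m ∈ S, aC B m * eC (-((m:ℝ) * x)) with hP
  have cP : Continuous P := by
    refine continuous_finset_sum _ fun m _ => continuous_const.mul ?_
    have : ∀ x : ℝ, eC (-((m:ℝ) * x)) = eC ((-(m:ℝ)) * x) := fun x => by ring_nf
    simpa only [this] using cont_eC (-(m:ℝ))
  have cPc : Continuous fun x => conj (P x) := Complex.continuous_conj.comp cP
  have cu : Continuous fun x => (u x : ℂ) := cont_uC B
  -- E2
  have hconjP : ∀ x : ℝ, conj (P x) = ∑ m ∈ S, conj (aC B m) * eC ((m:ℝ) * x) := by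
    intro x
    rw [hP, map_sum]
    refine Finset.sum_congr rfl fun m _ => ?_
    rw [map_mul, conj_eC, neg_neg]
  have E2 : (∫ x in (0:ℝ)..1, (u x : ℂ) * conj (P x))
      = ∑ m ∈ S, (Complex.normSq (aC B m) : ℂ) := by
    have h : ∀ x : ℝ, (u x : ℂ) * conj (P x)
        = ∑ m ∈ S, conj (aC B m) * ((u x : ℂ) * eC ((m:ℝ) * x)) := by
      intro x; rw [hconjP, Finset.mul_sum]
      exact Finset.sum_congr rfl fun m _ => by ring
    simp only [h]
    rw [intervalIntegral.integral_finset_sum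
      (fun m _ => ((continuous_const.fun_mul (cont_ue B _)).intervalIntegrable _ _))]
    refine Finset.sum_congr rfl fun m _ => ?_
    rw [intervalIntegral.integral_const_mul]
    rw [show (∫ x in (0:ℝ)..1, (u x : ℂ) * eC ((m:ℝ) * x)) = aC B m from rfl]
    rw [← Complex.normSq_eq_conj_mul_self]
  have E3 : (∫ x in (0:ℝ)..1, P x * (u x : ℂ))
      = ∑ m ∈ S, (Complex.normSq (aC B m) : ℂ) := by
    have h : ∀ x : ℝ, P x * (u x : ℂ)
        = ∑ m ∈ S, aC B m * ((u x : ℂ) * eC (((-m : ℤ):ℝ) * x)) := by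
      intro x; rw [hP, Finset.sum_mul]
      refine Finset.sum_congr rfl fun m _ => ?_
      have : eC (-((m:ℝ) * x)) = eC (((-m : ℤ):ℝ) * x) := by congr 1; push_cast; ring
      rw [this]; ring
    simp only [h]
    rw [intervalIntegral.integral_finset_sum
      (fun m _ => ((continuous_const.fun_mul (cont_ue B _)).intervalIntegrable _ _))]
    refine Finset.sum_congr rfl fun m _ => ?_
    rw [intervalIntegral.integral_const_mul]
    rw [show (∫ x in (0:ℝ)..1, (u x : ℂ) * eC (((-m : ℤ):ℝ) * x)) = aC B (-m) from rfl]
    rw [aC_neg, Complex.mul_conj]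
  have E4 : (∫ x in (0:ℝ)..1, P x * conj (P x))
      = ∑ m ∈ S, (Complex.normSq (aC B m) : ℂ) := by
    have h : ∀ x : ℝ, P x * conj (P x)
        = ∑ m ∈ S, ∑ n ∈ S, (aC B m * conj (aC B n)) * eC (((n - m : ℤ):ℝ) * x) := by
      intro x
      rw [hP, hconjP, Finset.sum_mul_sum]
      refine Finset.sum_congr rfl fun m _ => Finset.sum_congr rfl fun n _ => ?_
      have h1 : eC (-((m:ℝ) * x)) * eC ((n:ℝ) * x) = eC (((n - m : ℤ):ℝ) * x) := by
        rw [← eC_add]; congr 1; push_cast; ring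
      rw [← h1]; ring
    simp only [h]
    rw [intervalIntegral.integral_finset_sum (fun m _ => ?_)]
    swap
    · refine (Continuous.intervalIntegrable ?_ _ _)
      exact continuous_finset_sum _ fun n _ => continuous_const.mul (cont_eC _)
    rw [Finset.sum_congr rfl fun m hm => intervalIntegral.integral_finset_sum
      (fun n _ => ((continuous_const.fun_mul (cont_eC _)).intervalIntegrable _ _))]
    refine Finset.sum_congr rfl fun m hm => ?_
    have : ∀ n ∈ S, (∫ x in (0:ℝ)..1, (aC B m * conj (aC B n)) * eC (((n - m : ℤ):ℝ) * x))
        = if n = m then (aC B m * conj (aC B n)) else 0 := by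
      intro n _
      rw [intervalIntegral.integral_const_mul, orth]
      simp [sub_eq_zero]
    rw [Finset.sum_congr rfl this, Finset.sum_ite_eq' S m (fun n => aC B m * conj (aC B n)),
      if_pos hm, Complex.mul_conj]
  have E1 : (∫ x in (0:ℝ)..1, (u x : ℂ) * (u x : ℂ)) = ((B.card : ℝ) : ℂ) := by
    have h : ∀ x : ℝ, (u x : ℂ) * (u x : ℂ) = (((u x)^2 : ℝ) : ℂ) := by
      intro x; push_cast; ring
    simp only [h]
    rw [intervalIntegral.integral_ofReal, int_u_sq]
  -- expand
  have hexp : ∀ x : ℝ, ((u x : ℂ) - P x) * conj ((u x : ℂ) - P x)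
      = (u x : ℂ) * (u x : ℂ) - (u x : ℂ) * conj (P x) - P x * (u x : ℂ) + P x * conj (P x) := by
    intro x; rw [map_sub, Complex.conj_ofReal]; ring
  have iu : IntervalIntegrable (fun x => (u x : ℂ) * (u x : ℂ)) volume 0 1 :=
    (cu.mul cu).intervalIntegrable _ _
  have iup : IntervalIntegrable (fun x => (u x : ℂ) * conj (P x)) volume 0 1 :=
    (cu.mul cPc).intervalIntegrable _ _
  have ipu : IntervalIntegrable (fun x => P x * (u x : ℂ)) volume 0 1 :=
    (cP.mul cu).intervalIntegrable _ _
  have ipp : IntervalIntegrable (fun x => P x * conj (P x)) volume 0 1 :=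
    (cP.mul cPc).intervalIntegrable _ _
  have hZ : (∫ x in (0:ℝ)..1, ((u x : ℂ) - P x) * conj ((u x : ℂ) - P x))
      = ((B.card : ℝ) : ℂ) - ∑ m ∈ S, (Complex.normSq (aC B m) : ℂ) := by
    simp only [hexp]
    rw [intervalIntegral.integral_add ((iu.sub iup).sub ipu) ipp,
      intervalIntegral.integral_sub (iu.sub iup) ipu,
      intervalIntegral.integral_sub iu iup, E1, E2, E3, E4]
    ring
  have hint : IntervalIntegrable (fun x => ((u x : ℂ) - P x) * conj ((u x : ℂ) - P x))
      volume 0 1 :=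
    ((cu.sub cP).mul (Complex.continuous_conj.comp (cu.sub cP))).intervalIntegrable _ _
  have hZre : 0 ≤ (((B.card : ℝ) : ℂ) - ∑ m ∈ S, (Complex.normSq (aC B m) : ℂ)).re := by
    rw [← hZ, ← integral_re' hint]
    refine intervalIntegral.integral_nonneg (by norm_num) fun x _ => ?_
    rw [Complex.mul_conj]
    exact Complex.normSq_nonneg _
  have : (0:ℝ) ≤ (B.card : ℝ) - ∑ m ∈ S, Complex.normSq (aC B m) := by
    simpa using hZre
  linarith

end HHaux

open HHaux

/-- The `h*h`-trick: if `|P₁| ≤ P₂ + L` pointwise, `P̂₁(b) ≥ 1 + c` for `b ∈ B`,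
and `|P̂₂(m)| ≤ 1` for all `m`, then `L ≥ c|B|/‖1̂_B‖₁²`. -/
theorem hh_trick (c₁ c₂ : ℤ →₀ ℂ) (B : Finset ℤ) (hB : B.Nonempty)
    (c L : ℝ) (hc : 0 < c) (hL : 0 < L)
    (hreal : ∀ x : ℝ, (trigPoly c₂ x).im = 0)
    (hdom : ∀ x : ℝ, ‖trigPoly c₁ x‖ ≤ (trigPoly c₂ x).re + L)
    (hP1 : ∀ b ∈ B, (c₁ b).im = 0 ∧ 1 + c ≤ (c₁ b).re)
    (hP2 : ∀ m : ℤ, ‖c₂ m‖ ≤ 1) :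
    c * (B.card : ℝ) / (∫ x in (0:ℝ)..1, ‖fhat B x‖) ^ 2 ≤ L := by
  classical
  set I : ℝ := ∫ x in (0:ℝ)..1, ‖fhat B x‖ with hIdef
  have cardB_pos : (0:ℝ) < B.card := by
    exact_mod_cast Finset.card_pos.mpr hB
  have hu_nonneg : ∀ x : ℝ, 0 ≤ ‖fhat B x‖ := fun x => norm_nonneg _
  have hu_le : ∀ x : ℝ, ‖fhat B x‖ ≤ (B.card : ℝ) := by
    intro x
    rw [fhat]
    calc ‖∑ b ∈ B, eC ((b:ℝ) * x)‖ ≤ ∑ b ∈ B, ‖eC ((b:ℝ) * x)‖ :=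
          norm_sum_le _ _
      _ = (B.card : ℝ) := by simp [abs_eC]
  have hI1 : 1 ≤ I := by
    have h1 : (B.card : ℝ) = ∫ x in (0:ℝ)..1, (‖fhat B x‖)^2 := (int_u_sq B).symm
    have h2 : (∫ x in (0:ℝ)..1, (‖fhat B x‖)^2)
        ≤ ∫ x in (0:ℝ)..1, (B.card : ℝ) * ‖fhat B x‖ := by
      refine intervalIntegral.integral_mono_on (by norm_num)
        (((cont_u B).pow 2).intervalIntegrable _ _)
        ((continuous_const.mul (cont_u B)).intervalIntegrable _ _) fun x _ => ?_
      rw [sq]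
      exact mul_le_mul_of_nonneg_right (hu_le x) (hu_nonneg x)
    rw [intervalIntegral.integral_const_mul] at h2
    nlinarith [h1, h2]
  have hI_pos : (0:ℝ) < I := lt_of_lt_of_le one_pos hI1
  -- closed form of the inner integral against `P₁`
  set g : ℝ → ℂ := fun y => ∑ m ∈ c₁.support ∩ B, c₁ m * eC ((m:ℝ) * y) with hg
  have hg_cont : Continuous g := continuous_finset_sum _ fun m _ => continuous_const.mul (cont_eC _)
  have claim1 : ∀ y : ℝ, (∫ x in (0:ℝ)..1, trigPoly c₁ (x + y) * conj (fhat B x)) = g y := by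
    intro y
    have h : ∀ x : ℝ, trigPoly c₁ (x + y) * conj (fhat B x)
        = ∑ m ∈ c₁.support, (c₁ m * eC ((m:ℝ) * y)) * (eC ((m:ℝ) * x) * conj (fhat B x)) := by
      intro x
      rw [trigPoly, Finset.sum_mul]
      refine Finset.sum_congr rfl fun m _ => ?_
      rw [show (m:ℝ) * (x + y) = (m:ℝ) * x + (m:ℝ) * y by ring, eC_add]
      ring
    simp only [h]
    rw [intervalIntegral.integral_finset_sum (fun m _ =>
      (continuous_const.fun_mul ((cont_eC _).fun_mul (cont_conj_fhat B))).intervalIntegrable _ _)]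
    simp only [intervalIntegral.integral_const_mul, intF, mul_ite, mul_one, mul_zero]
    rw [Finset.sum_ite_mem]
  have hBsub : B ⊆ c₁.support := by
    intro b hb
    refine Finsupp.mem_support_iff.mpr fun h0 => ?_
    have h2 := (hP1 b hb).2
    rw [h0] at h2
    simp only [Complex.zero_re] at h2
    linarith
  have hinter : c₁.support ∩ B = B := Finset.inter_eq_right.mpr hBsub
  have claim2 : (∫ y in (0:ℝ)..1, g y * conj (fhat B y)) = ∑ b ∈ B, c₁ b := by
    have h : ∀ y : ℝ, g y * conj (fhat B y)
        = ∑ m ∈ c₁.support ∩ B, c₁ m * (eC ((m:ℝ) * y) * conj (fhat B y)) := by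
      intro y
      rw [hg, Finset.sum_mul]
      exact Finset.sum_congr rfl fun m _ => by ring
    simp only [h]
    rw [intervalIntegral.integral_finset_sum (fun m _ =>
      (continuous_const.fun_mul ((cont_eC _).fun_mul (cont_conj_fhat B))).intervalIntegrable _ _)]
    rw [hinter]
    refine Finset.sum_congr rfl fun b hb => ?_
    rw [intervalIntegral.integral_const_mul, intF, if_pos hb, mul_one]
  have lower : (1 + c) * (B.card : ℝ) ≤ (∑ b ∈ B, c₁ b).re := by
    rw [Complex.re_sum]
    calc (1 + c) * (B.card : ℝ) = ∑ _b ∈ B, (1 + c) := by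
          rw [Finset.sum_const, nsmul_eq_mul]; ring
      _ ≤ ∑ b ∈ B, (c₁ b).re := Finset.sum_le_sum fun b hb => (hP1 b hb).2
  -- closed form against `P₂`
  set Vc : ℝ → ℂ := fun y => ∑ m ∈ c₂.support, (c₂ m * eC ((m:ℝ) * y)) * aC B m with hVc
  have hVc_cont : Continuous Vc :=
    continuous_finset_sum _ fun m _ => (continuous_const.mul (cont_eC _)).mul continuous_const
  have claimV : ∀ y : ℝ,
      (∫ x in (0:ℝ)..1, trigPoly c₂ (x + y) * (‖fhat B x‖ : ℂ)) = Vc y := by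
    intro y
    have h : ∀ x : ℝ, trigPoly c₂ (x + y) * (‖fhat B x‖ : ℂ)
        = ∑ m ∈ c₂.support, (c₂ m * eC ((m:ℝ) * y))
            * ((‖fhat B x‖ : ℂ) * eC ((m:ℝ) * x)) := by
      intro x
      rw [trigPoly, Finset.sum_mul]
      refine Finset.sum_congr rfl fun m _ => ?_
      rw [show (m:ℝ) * (x + y) = (m:ℝ) * x + (m:ℝ) * y by ring, eC_add]
      ring
    simp only [h]
    rw [intervalIntegral.integral_finset_sum (fun m _ =>
      (continuous_const.fun_mul (cont_ue B _)).intervalIntegrable _ _)]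
    exact Finset.sum_congr rfl fun m _ => by rw [intervalIntegral.integral_const_mul]; rfl
  -- pointwise bound on `|g|`
  have keybound : ∀ y : ℝ, ‖g y‖ ≤ (Vc y).re + L * I := by
    intro y
    rw [← claim1 y]
    have step1 : ‖∫ x in (0:ℝ)..1, trigPoly c₁ (x + y) * conj (fhat B x)‖
        ≤ ∫ x in (0:ℝ)..1, ‖trigPoly c₁ (x + y)‖ * ‖fhat B x‖ := by
      refine le_trans (intervalIntegral.norm_integral_le_integral_norm (by norm_num)) ?_
      refine le_of_eq (intervalIntegral.integral_congr fun x _ => ?_)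
      rw [norm_mul]
      simp
    refine le_trans step1 ?_
    have step2 : (∫ x in (0:ℝ)..1, ‖trigPoly c₁ (x + y)‖ * ‖fhat B x‖)
        ≤ ∫ x in (0:ℝ)..1, ((trigPoly c₂ (x + y)).re + L) * ‖fhat B x‖ := by
      refine intervalIntegral.integral_mono_on (by norm_num) ?_ ?_ fun x _ =>
        mul_le_mul_of_nonneg_right (hdom (x + y)) (hu_nonneg x)
      · exact ((continuous_norm.comp
          ((cont_trig c₁).comp (continuous_id.add continuous_const))).mul
            (cont_u B)).intervalIntegrable _ _
      · exact (((Complex.continuous_re.comp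
          ((cont_trig c₂).comp (continuous_id.add continuous_const))).add
            continuous_const).mul (cont_u B)).intervalIntegrable _ _
    refine le_trans step2 (le_of_eq ?_)
    have h : ∀ x : ℝ, ((trigPoly c₂ (x + y)).re + L) * ‖fhat B x‖
        = (trigPoly c₂ (x + y) * (‖fhat B x‖ : ℂ)).re
          + L * ‖fhat B x‖ := by
      intro x
      simp [Complex.mul_re]
      ring
    simp only [h]
    have i1 : IntervalIntegrable
        (fun x => (trigPoly c₂ (x + y) * (‖fhat B x‖ : ℂ)).re) volume 0 1 :=
      (Complex.continuous_re.comp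
        (((cont_trig c₂).comp (continuous_id.add continuous_const)).mul
          (cont_uC B))).intervalIntegrable _ _
    have i2 : IntervalIntegrable (fun x => L * ‖fhat B x‖) volume 0 1 :=
      (continuous_const.mul (cont_u B)).intervalIntegrable _ _
    have i3 : IntervalIntegrable
        (fun x => trigPoly c₂ (x + y) * (‖fhat B x‖ : ℂ)) volume 0 1 :=
      (((cont_trig c₂).comp (continuous_id.add continuous_const)).mul
        (cont_uC B)).intervalIntegrable _ _
    rw [intervalIntegral.integral_add i1 i2, integral_re' i3, claimV y,
      intervalIntegral.integral_const_mul]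
  -- main chain
  have habs1 : ‖∑ b ∈ B, c₁ b‖
      ≤ ∫ y in (0:ℝ)..1, ((Vc y).re + L * I) * ‖fhat B y‖ := by
    rw [← claim2]
    refine le_trans (intervalIntegral.norm_integral_le_integral_norm (by norm_num)) ?_
    refine intervalIntegral.integral_mono_on (by norm_num) ?_ ?_ fun y _ => ?_
    · exact ((hg_cont.mul (cont_conj_fhat B)).norm).intervalIntegrable _ _
    · exact (((Complex.continuous_re.comp hVc_cont).add continuous_const).mul
        (cont_u B)).intervalIntegrable _ _
    · rw [norm_mul]
      have hcj : ‖conj (fhat B y)‖ = ‖fhat B y‖ := by simp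
      rw [hcj]
      exact mul_le_mul_of_nonneg_right (keybound y) (hu_nonneg y)
  have hRHS : (∫ y in (0:ℝ)..1, ((Vc y).re + L * I) * ‖fhat B y‖)
      = (∑ m ∈ c₂.support, ((c₂ m * aC B m) * aC B m)).re + (L * I) * I := by
    have h : ∀ y : ℝ, ((Vc y).re + L * I) * ‖fhat B y‖
        = (Vc y * (‖fhat B y‖ : ℂ)).re + (L * I) * ‖fhat B y‖ := by
      intro y
      simp [Complex.mul_re]
      ring
    simp only [h]
    have i1 : IntervalIntegrable
        (fun y => (Vc y * (‖fhat B y‖ : ℂ)).re) volume 0 1 :=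
      (Complex.continuous_re.comp (hVc_cont.mul (cont_uC B))).intervalIntegrable _ _
    have i2 : IntervalIntegrable (fun y => (L * I) * ‖fhat B y‖) volume 0 1 :=
      (continuous_const.mul (cont_u B)).intervalIntegrable _ _
    have i3 : IntervalIntegrable
        (fun y => Vc y * (‖fhat B y‖ : ℂ)) volume 0 1 :=
      (hVc_cont.mul (cont_uC B)).intervalIntegrable _ _
    rw [intervalIntegral.integral_add i1 i2, integral_re' i3,
      intervalIntegral.integral_const_mul]
    congr 2
    have h2 : ∀ y : ℝ, Vc y * (‖fhat B y‖ : ℂ)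
        = ∑ m ∈ c₂.support, (c₂ m * aC B m)
            * ((‖fhat B y‖ : ℂ) * eC ((m:ℝ) * y)) := by
      intro y
      rw [hVc, Finset.sum_mul]
      exact Finset.sum_congr rfl fun m _ => by ring
    simp only [h2]
    rw [intervalIntegral.integral_finset_sum (fun m _ =>
      (continuous_const.fun_mul (cont_ue B _)).intervalIntegrable _ _)]
    exact Finset.sum_congr rfl fun m _ => by rw [intervalIntegral.integral_const_mul]; rfl
  have hbb : (∑ m ∈ c₂.support, ((c₂ m * aC B m) * aC B m)).re ≤ (B.card : ℝ) := by
    refine le_trans (Complex.re_le_norm _) (le_trans (norm_sum_le _ _) ?_)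
    refine le_trans (Finset.sum_le_sum fun m _ => ?_) (bessel B c₂.support)
    rw [norm_mul, norm_mul]
    calc ‖c₂ m‖ * ‖aC B m‖ * ‖aC B m‖
        ≤ 1 * (‖aC B m‖ * ‖aC B m‖) := by
          rw [mul_assoc]
          exact mul_le_mul_of_nonneg_right (hP2 m) (by positivity)
      _ = Complex.normSq (aC B m) := by rw [one_mul, ← Complex.sq_norm, sq]
  have main : (1 + c) * (B.card : ℝ) ≤ (B.card : ℝ) + (L * I) * I := by
    calc (1 + c) * (B.card : ℝ) ≤ (∑ b ∈ B, c₁ b).re := lower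
      _ ≤ ‖∑ b ∈ B, c₁ b‖ := Complex.re_le_norm _
      _ ≤ (∑ m ∈ c₂.support, ((c₂ m * aC B m) * aC B m)).re + (L * I) * I := by
          rw [← hRHS]; exact habs1
      _ ≤ (B.card : ℝ) + (L * I) * I := by linarith [hbb]
  rw [div_le_iff₀ (by positivity : (0:ℝ) < I ^ 2)]
  nlinarith [main]
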